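/- arXiv:1703.05538 — 2 statements merged into one kernel-verified Lean document; each statement's English description precedes it below -/
import Mathlib

section
/- For every N > 0 and all real numbers r, s ≥ 0, one has |F_N(r) − F_N(s)| ≤ (1/N) · F_N(r) · F_N(s) · |r − s|, where F_N(r) = min(1, N/r) for r > 0 and F_N(0) = 1. -/
/-- The cutoff function of the globally modified Navier-Stokes equations:
`F_N(r) = min(1, N/r)` for `r > 0`, and `F_N(0) = 1`. -/
noncomputable def FN (N r : ℝ) : ℝ := if r = 0 then 1 else min 1 (N / r)

lemma FN_eq_one {N r : ℝ} (hN : 0 < N) (hr : 0 ≤ r) (h : r ≤ N) : FN N r = 1 := by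
  unfold FN
  rcases eq_or_lt_of_le hr with h0 | h0
  · simp [← h0]
  · rw [if_neg (ne_of_gt h0), min_eq_left]
    rw [le_div_iff₀ h0]
    linarith

lemma FN_eq_div {N r : ℝ} (hN : 0 < N) (h : N < r) : FN N r = N / r := by
  have hr : 0 < r := hN.trans h
  unfold FN
  rw [if_neg (ne_of_gt hr), min_eq_right]
  rw [div_le_one hr]
  linarith

lemma stmt_aux (N : ℝ) (hN : 0 < N) (r s : ℝ) (hr : 0 ≤ r) (hs : 0 ≤ s)
    (hrs : r ≤ s) :
    |FN N r - FN N s| ≤ (1 / N) * FN N r * FN N s * |r - s| := by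
  rcases le_or_gt s N with h1 | h1
  · rw [FN_eq_one hN hr (hrs.trans h1), FN_eq_one hN hs h1]
    simp [abs_nonneg]
    positivity
  · rcases le_or_gt r N with h2 | h2
    · rw [FN_eq_one hN hr h2, FN_eq_div hN h1]
      have hs0 : 0 < s := hN.trans h1
      rw [abs_of_nonneg (by rw [sub_nonneg, div_le_one hs0]; linarith),
        abs_of_nonpos (by linarith)]
      rw [show (1:ℝ) - N / s = (s - N) / s by field_simp,
        show (1:ℝ) / N * 1 * (N / s) * -(r - s) = (s - r) / s by field_simp; ring]
      gcongr
    · have hr0 : 0 < r := hN.trans h2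
      have hs0 : 0 < s := hN.trans h1
      rw [FN_eq_div hN h1, FN_eq_div hN h2]
      rw [abs_of_nonneg (by rw [sub_nonneg]; exact div_le_div_of_nonneg_left hN.le hr0 hrs),
        abs_of_nonpos (by linarith)]
      rw [div_sub_div _ _ (ne_of_gt hr0) (ne_of_gt hs0)]
      field_simp
      nlinarith

theorem stmt_1 (N : ℝ) (hN : 0 < N) (r s : ℝ) (hr : 0 ≤ r) (hs : 0 ≤ s) :
    |FN N r - FN N s| ≤ (1 / N) * FN N r * FN N s * |r - s| := by
  rcases le_total r s with h | h
  · exact stmt_aux N hN r s hr hs h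
  · rw [abs_sub_comm, abs_sub_comm r s]
    calc |FN N s - FN N r| ≤ (1 / N) * FN N s * FN N r * |s - r| :=
          stmt_aux N hN s r hs hr h
      _ = (1 / N) * FN N r * FN N s * |s - r| := by ring
end

section
/- Let y : [t₂,∞) → ℝ be nonnegative and absolutely continuous, and g ≥ 0 locally integrable, with y′(t) ≤ g(t) y(t) for a.e. t ≥ t₂. Suppose moreover ∫_{t₂}^{t} y(s) ds ≤ I(t) for all t. Then for all t ≥ t₂, (t − t₂) y(t) ≤ I(t) · exp(∫_{t₂}^t g(s) ds). -/
open MeasureTheory Set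

theorem stmt_8 (t₂ : ℝ) (y y' g I : ℝ → ℝ)
    (hy_nonneg : ∀ t : ℝ, t₂ ≤ t → 0 ≤ y t)
    (hg_nonneg : ∀ t : ℝ, t₂ ≤ t → 0 ≤ g t)
    (hg_int : ∀ t : ℝ, t₂ ≤ t → IntervalIntegrable g volume t₂ t)
    (hy_int : ∀ t : ℝ, t₂ ≤ t → IntervalIntegrable y volume t₂ t)
    (hy_deriv : ∀ t : ℝ, t₂ ≤ t → HasDerivAt y (y' t) t)
    (hineq : ∀ t : ℝ, t₂ ≤ t → y' t ≤ g t * y t)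
    (hI : ∀ t : ℝ, t₂ ≤ t → ∫ s in t₂..t, y s ≤ I t) :
    ∀ t : ℝ, t₂ ≤ t →
      (t - t₂) * y t ≤ I t * Real.exp (∫ s in t₂..t, g s) := by
  intro t ht
  set G : ℝ := ∫ s in t₂..t, g s with hG
  have hEpos : 0 < Real.exp G := Real.exp_pos G
  -- Gronwall step: for t₂ ≤ s ≤ t, y t ≤ y s * exp G
  have key : ∀ s, t₂ ≤ s → s ≤ t → y t ≤ y s * Real.exp G := by
    intro s hs hst
    have hsub : Icc s t ⊆ Icc t₂ t := Icc_subset_Icc hs le_rfl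
    have hgI : IntegrableOn g (Icc s t) volume :=
      ((intervalIntegrable_iff_integrableOn_Icc_of_le ht).1 (hg_int t ht)).mono_set hsub
    have hgi1 : IntervalIntegrable g volume t₂ s :=
      (hg_int t ht).mono_set (by rw [uIcc_of_le hs, uIcc_of_le ht]; exact Icc_subset_Icc le_rfl hst)
    have hgi2 : IntervalIntegrable g volume s t :=
      (hg_int t ht).mono_set (by rw [uIcc_of_le hst, uIcc_of_le ht]; exact hsub)
    have hAG : (∫ u in s..t, g u) ≤ G := by
      have hsplit : (∫ u in t₂..s, g u) + (∫ u in s..t, g u) = G :=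
        intervalIntegral.integral_add_adjacent_intervals hgi1 hgi2
      have h1 : (0:ℝ) ≤ ∫ u in t₂..s, g u :=
        intervalIntegral.integral_nonneg hs fun u hu => hg_nonneg u hu.1
      linarith
    have step : ∀ ε : ℝ, 0 < ε → y t ≤ (y s + ε) * Real.exp (∫ u in s..t, g u) := by
      intro ε hε
      have hpos : ∀ u : ℝ, t₂ ≤ u → (0:ℝ) < y u + ε := fun u hu =>
        add_pos_of_nonneg_of_pos (hy_nonneg u hu) hε
      have hlog : Real.log (y t + ε) - Real.log (y s + ε) ≤ ∫ u in s..t, g u := by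
        apply intervalIntegral.sub_le_integral_of_hasDeriv_right_of_le hst
          (g := fun u => Real.log (y u + ε)) (g' := fun u => y' u / (y u + ε)) (φ := g)
        · intro u hu
          have hu2 : t₂ ≤ u := hs.trans hu.1
          exact (((hy_deriv u hu2).add_const ε).log
            (hpos u hu2).ne').continuousAt.continuousWithinAt
        · intro u hu
          have hu2 : t₂ ≤ u := hs.trans hu.1.le
          exact (((hy_deriv u hu2).add_const ε).log (hpos u hu2).ne').hasDerivWithinAt
        · exact hgI
        · intro u hu
          have hu2 : t₂ ≤ u := hs.trans hu.1.le
          rw [div_le_iff₀ (hpos u hu2)]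
          calc y' u ≤ g u * y u := hineq u hu2
            _ ≤ g u * (y u + ε) := by nlinarith [hg_nonneg u hu2]
      have hlog' : Real.log (y t + ε) ≤ Real.log (y s + ε) + ∫ u in s..t, g u := by linarith
      have := Real.exp_le_exp.2 hlog'
      rw [Real.exp_add, Real.exp_log (hpos t ht), Real.exp_log (hpos s hs)] at this
      linarith [hε.le, (Real.exp_pos (∫ u in s..t, g u)).le]
    have step' : ∀ ε : ℝ, 0 < ε → y t ≤ y s * Real.exp G + ε := by
      intro ε hε
      have h1 := step (ε / Real.exp G) (div_pos hε hEpos)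
      have h2 : Real.exp (∫ u in s..t, g u) ≤ Real.exp G := Real.exp_le_exp.2 hAG
      have h3 : (y s + ε / Real.exp G) * Real.exp (∫ u in s..t, g u)
          ≤ (y s + ε / Real.exp G) * Real.exp G := by
        apply mul_le_mul_of_nonneg_left h2
        have := hy_nonneg s hs
        positivity
      calc y t ≤ (y s + ε / Real.exp G) * Real.exp (∫ u in s..t, g u) := h1
        _ ≤ (y s + ε / Real.exp G) * Real.exp G := h3
        _ = y s * Real.exp G + ε := by
            rw [add_mul, div_mul_cancel₀ _ hEpos.ne']
    exact le_of_forall_pos_le_add step'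
  -- integrate the constant bound
  have hconst : ∀ s ∈ Icc t₂ t, y t / Real.exp G ≤ y s := by
    intro s hs
    rw [div_le_iff₀ hEpos]
    exact key s hs.1 hs.2
  have hmono : (∫ _ in t₂..t, y t / Real.exp G) ≤ ∫ s in t₂..t, y s :=
    intervalIntegral.integral_mono_on ht intervalIntegrable_const (hy_int t ht) hconst
  rw [intervalIntegral.integral_const, smul_eq_mul] at hmono
  have h4 : (t - t₂) * (y t / Real.exp G) ≤ I t := hmono.trans (hI t ht)
  calc (t - t₂) * y t = (t - t₂) * (y t / Real.exp G) * Real.exp G := by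
        field_simp
    _ ≤ I t * Real.exp G := mul_le_mul_of_nonneg_right h4 hEpos.le
end
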